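/- Let p(x, y) be a real polynomial in two variables, viewed as a binary operation x ∗ y := p(x, y) on ℝ. If ∗ is associative, then p has degree at most 1 in each variable, i.e., p(x, y) = α + βx + γy + δxy for some real α, β, γ, δ. -/

import Mathlib

/-- Evaluation of a two-variable real polynomial at `(x, y)`. -/
noncomputable def ev2 (p : MvPolynomial (Fin 2) ℝ) (x y : ℝ) : ℝ :=
  MvPolynomial.eval ![x, y] p

lemma key (q : Polynomial (Polynomial ℝ)) (f : ℝ → ℝ → ℝ)
    (hf : ∀ x y, f x y = ((q.map (Polynomial.evalRingHom y)).eval x))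
    (hassoc : ∀ x y z, f (f x y) z = f x (f y z)) :
    ∀ x y, f x y = (q.coeff 0).eval y + (q.coeff 1).eval y * x := by
  have hcomp : ∀ y z : ℝ,
      (q.map (Polynomial.evalRingHom z)).comp (q.map (Polynomial.evalRingHom y))
        = q.map (Polynomial.evalRingHom (f y z)) := by
    intro y z
    apply Polynomial.funext
    intro x
    rw [Polynomial.eval_comp, ← hf, ← hf, ← hf, hassoc]
  have hdeg : q.natDegree ≤ 1 := by
    by_contra h
    push_neg at h
    have hq0 : q ≠ 0 := by intro h0; simp [h0] at h
    have ha : q.leadingCoeff ≠ 0 := Polynomial.leadingCoeff_ne_zero.mpr hq0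
    have hexists : ∃ y : ℝ, (q.leadingCoeff).eval y ≠ 0 := by
      by_contra hall
      push_neg at hall
      exact ha (Polynomial.funext (fun r => by simp [hall r]))
    obtain ⟨y, hy⟩ := hexists
    have hQdeg : (q.map (Polynomial.evalRingHom y)).natDegree = q.natDegree := by
      apply le_antisymm Polynomial.natDegree_map_le
      apply Polynomial.le_natDegree_of_ne_zero
      rw [Polynomial.coeff_map, Polynomial.coeff_natDegree]
      exact hy
    have h2 : ((q.map (Polynomial.evalRingHom y)).comp
        (q.map (Polynomial.evalRingHom y))).natDegree = q.natDegree * q.natDegree := by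
      rw [Polynomial.natDegree_comp, hQdeg]
    have h3 : (q.map (Polynomial.evalRingHom (f y y))).natDegree ≤ q.natDegree :=
      Polynomial.natDegree_map_le
    rw [hcomp y y] at h2
    rw [h2] at h3
    nlinarith
  intro x y
  rw [hf]
  have h1 : (q.map (Polynomial.evalRingHom y)).natDegree ≤ 1 :=
    le_trans Polynomial.natDegree_map_le hdeg
  conv_lhs => rw [Polynomial.eq_X_add_C_of_natDegree_le_one h1]
  simp [Polynomial.coeff_map]
  ring

lemma ev2_repr (p : MvPolynomial (Fin 2) ℝ) (x y : ℝ) :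
    ev2 p x y = (((MvPolynomial.aeval ![Polynomial.X, Polynomial.C Polynomial.X] p :
      Polynomial (Polynomial ℝ))).map (Polynomial.evalRingHom y)).eval x := by
  induction p using MvPolynomial.induction_on with
  | C a => simp [ev2]
  | add p q hp hq =>
      simp only [ev2, map_add, Polynomial.map_add, Polynomial.eval_add] at *
      rw [hp, hq]
  | mul_X p i hp =>
      simp only [ev2, map_mul, Polynomial.map_mul, Polynomial.eval_mul] at *
      rw [hp]
      congr 1
      fin_cases i <;> simp

lemma ev2_repr' (p : MvPolynomial (Fin 2) ℝ) (x y : ℝ) :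
    ev2 p y x = (((MvPolynomial.aeval ![Polynomial.C Polynomial.X, Polynomial.X] p :
      Polynomial (Polynomial ℝ))).map (Polynomial.evalRingHom y)).eval x := by
  induction p using MvPolynomial.induction_on with
  | C a => simp [ev2]
  | add p q hp hq =>
      simp only [ev2, map_add, Polynomial.map_add, Polynomial.eval_add] at *
      rw [hp, hq]
  | mul_X p i hp =>
      simp only [ev2, map_mul, Polynomial.map_mul, Polynomial.eval_mul] at *
      rw [hp]
      congr 1
      fin_cases i <;> simp

theorem stmt_7 (p : MvPolynomial (Fin 2) ℝ)
    (hassoc : ∀ x y z : ℝ, ev2 p (ev2 p x y) z = ev2 p x (ev2 p y z)) :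
    ∃ α β γ δ : ℝ, ∀ x y : ℝ, ev2 p x y = α + β * x + γ * y + δ * (x * y) := by
  set q := (MvPolynomial.aeval ![Polynomial.X, Polynomial.C Polynomial.X] p :
    Polynomial (Polynomial ℝ)) with hq
  set q' := (MvPolynomial.aeval ![Polynomial.C Polynomial.X, Polynomial.X] p :
    Polynomial (Polynomial ℝ)) with hq'
  have k1 := key q (fun x y => ev2 p x y) (fun x y => ev2_repr p x y) hassoc
  have k2 := key q' (fun x y => ev2 p y x) (fun x y => ev2_repr' p x y)
    (fun x y z => (hassoc z y x).symm)
  refine ⟨(q'.coeff 0).eval 0, (q'.coeff 0).eval 1 - (q'.coeff 0).eval 0,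
    (q'.coeff 1).eval 0, (q'.coeff 1).eval 1 - (q'.coeff 1).eval 0, ?_⟩
  intro x y
  have hA : (q.coeff 0).eval y = (q'.coeff 0).eval 0 + (q'.coeff 1).eval 0 * y := by
    have e1 := k1 0 y
    have e2 := k2 y 0
    simp at e1 e2
    linarith
  have hB : (q.coeff 1).eval y
      = ((q'.coeff 0).eval 1 - (q'.coeff 0).eval 0)
        + ((q'.coeff 1).eval 1 - (q'.coeff 1).eval 0) * y := by
    have e1 := k1 1 y
    have e2 := k2 y 1
    linarith
  rw [k1 x y]
  linear_combination hA + x * hB
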